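/- (Fort–Hedlund) For every integer n ≥ 3, the covering number for pairs by triples satisfies C(n,3,2) = ⌈(n/3)·⌈(n−1)/2⌉⌉. -/

import Mathlib

/-- An `(n,3,2)`-covering: a 3-uniform set system of order `n` in which every
2-subset of the point set is contained in at least one block. -/
def IsCovering (n : ℕ) (X : Finset ℕ) (A : Finset (Finset ℕ)) : Prop :=
  X.card = n ∧ (∀ B ∈ A, B ⊆ X ∧ B.card = 3) ∧
    ∀ x ∈ X, ∀ y ∈ X, x ≠ y → ∃ B ∈ A, x ∈ B ∧ y ∈ B

/-- The covering number `C(n,3,2)`: the minimum number of blocks in an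
`(n,3,2)`-covering. -/
noncomputable def coveringNumber (n : ℕ) : ℕ :=
  sInf {m | ∃ X A, IsCovering n X A ∧ A.card = m}

namespace FH

noncomputable def tgt (n : ℕ) : ℕ := (n * (n / 2) + 2) / 3

lemma ceil_half (n : ℕ) : ⌈((n : ℚ) - 1) / 2⌉ = ((n / 2 : ℕ) : ℤ) := by
  have hle : (2 * (n/2 : ℕ) : ℚ) ≤ (n : ℚ) := by
    exact_mod_cast Nat.cast_le.2 (by omega : 2 * (n/2) ≤ n)
  have hgt : (n : ℚ) ≤ (2 * (n/2 : ℕ) + 1 : ℚ) := by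
    exact_mod_cast Nat.cast_le.2 (by omega : n ≤ 2 * (n/2) + 1)
  rw [Int.ceil_eq_iff, Int.cast_natCast]
  push_cast at hle hgt
  constructor
  · rw [lt_div_iff₀ (by norm_num : (0:ℚ) < 2)]; linarith
  · rw [div_le_iff₀ (by norm_num : (0:ℚ) < 2)]; linarith

lemma ceil_tgt (n : ℕ) : ⌈(n : ℚ) / 3 * ((n / 2 : ℕ) : ℚ)⌉ = (tgt n : ℤ) := by
  have h1 : ((n * (n/2) : ℕ) : ℚ) ≤ ((3 * tgt n : ℕ) : ℚ) :=
    Nat.cast_le.2 (by unfold tgt; omega)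
  have h2 : ((3 * tgt n : ℕ) : ℚ) < ((n * (n/2) + 3 : ℕ) : ℚ) :=
    Nat.cast_lt.2 (by unfold tgt; omega)
  have key : (n:ℚ)/3 * ((n/2 : ℕ):ℚ) = ((n * (n/2) : ℕ) : ℚ) / 3 := by push_cast; ring
  rw [Int.ceil_eq_iff, Int.cast_natCast, key]
  push_cast at h1 h2
  constructor
  · rw [lt_div_iff₀ (by norm_num : (0:ℚ) < 3)]; linarith
  · rw [div_le_iff₀ (by norm_num : (0:ℚ) < 3)]; linarith

lemma tgt_eq_ceil (n : ℕ) (hn : 1 ≤ n) :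
    (tgt n : ℤ) = ⌈(n : ℚ) / 3 * ((⌈((n : ℚ) - 1) / 2⌉ : ℤ) : ℚ)⌉ := by
  rw [ceil_half n, ← ceil_tgt n, Int.cast_natCast]

lemma lower_bound {n : ℕ} {X : Finset ℕ} {A : Finset (Finset ℕ)}
    (h : IsCovering n X A) : tgt n ≤ A.card := by
  obtain ⟨hX, hB, hcov⟩ := h
  have hdeg : ∀ x ∈ X, n / 2 ≤ (A.filter (fun B => x ∈ B)).card := by
    intro x hx
    have hsub : X.erase x ⊆ (A.filter (fun B => x ∈ B)).biUnion (fun B => B.erase x) := by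
      intro y hy
      rw [Finset.mem_erase] at hy
      obtain ⟨B, hBA, hxB, hyB⟩ := hcov x hx y hy.2 (fun h => hy.1 h.symm)
      exact Finset.mem_biUnion.2 ⟨B, Finset.mem_filter.2 ⟨hBA, hxB⟩,
        Finset.mem_erase.2 ⟨hy.1, hyB⟩⟩
    have hcard : (X.erase x).card ≤
        ∑ B ∈ A.filter (fun B => x ∈ B), (B.erase x).card :=
      le_trans (Finset.card_le_card hsub) Finset.card_biUnion_le
    have hsum : ∑ B ∈ A.filter (fun B => x ∈ B), (B.erase x).card
        = (A.filter (fun B => x ∈ B)).card * 2 := by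
      refine Finset.sum_const_nat (fun B hBmem => ?_)
      rw [Finset.mem_filter] at hBmem
      rw [Finset.card_erase_of_mem hBmem.2, (hB B hBmem.1).2]
    rw [Finset.card_erase_of_mem hx, hX, hsum] at hcard
    omega
  have hdouble : ∑ x ∈ X, (A.filter (fun B => x ∈ B)).card = 3 * A.card := by
    have : ∀ x, (A.filter (fun B => x ∈ B)).card
        = ∑ B ∈ A, if x ∈ B then 1 else 0 := fun x => Finset.card_filter _ _
    simp_rw [this]
    rw [Finset.sum_comm]
    rw [Finset.sum_congr rfl (fun B hBmem => ?_), Finset.sum_const, smul_eq_mul, mul_comm]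
    have hBX := (hB B hBmem).1
    have : ∑ x ∈ X, (if x ∈ B then 1 else 0) = (X.filter (fun x => x ∈ B)).card :=
      (Finset.card_filter _ _).symm
    rw [this, Finset.filter_mem_eq_inter, Finset.inter_eq_right.2 hBX, (hB B hBmem).2]
  have htotal : n * (n / 2) ≤ 3 * A.card := by
    calc n * (n / 2) = ∑ _x ∈ X, n / 2 := by rw [Finset.sum_const, smul_eq_mul, hX]
    _ ≤ ∑ x ∈ X, (A.filter (fun B => x ∈ B)).card := Finset.sum_le_sum hdeg
    _ = 3 * A.card := hdouble
  unfold tgt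
  generalize n * (n / 2) = q at htotal ⊢
  omega

end FH


namespace FH

/-- Transfer an abstract covering family on a finite type to `ℕ`. -/
lemma pair_eq {β : Type*} [DecidableEq β] {a b c d : β}
    (h : ({a, b} : Finset β) = {c, d}) : a = c ∧ b = d ∨ a = d ∧ b = c := by
  have := Finset.ext_iff.1 h
  simp only [Finset.mem_insert, Finset.mem_singleton] at this
  have h1 := (this a).1 (Or.inl rfl)
  have h2 := (this b).1 (Or.inr rfl)
  have h3 := (this c).2 (Or.inl rfl)
  have h4 := (this d).2 (Or.inr rfl)
  tauto

abbrev Pt (m : ℕ) := ZMod m × Fin 3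

lemma fin3_succ_ne (k : Fin 3) : k + 1 ≠ k := by revert k; decide

lemma fin3_cases : ∀ {k l : Fin 3}, k ≠ l → l = k + 1 ∨ k = l + 1 := by decide

variable {m : ℕ} [NeZero m]

lemma val_inj {a b : ZMod m} (h : a.val = b.val) : a = b := ZMod.val_injective m h

noncomputable def blkA (f : Fin 3 → ZMod m ≃ ZMod m) (k : Fin 3) (i j : ZMod m) : Finset (Pt m) :=
  {(i, k), (j, k), (f k (i + j), k + 1)}

noncomputable def famA (f : Fin 3 → ZMod m ≃ ZMod m) : Finset (Finset (Pt m)) :=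
  ((Finset.univ : Finset (Fin 3)) ×ˢ ((Finset.univ ×ˢ Finset.univ).filter
      (fun p : ZMod m × ZMod m => p.1.val < p.2.val))).image
    (fun x => blkA f x.1 x.2.1 x.2.2)

lemma blkA_mem_famA (f : Fin 3 → ZMod m ≃ ZMod m) (k : Fin 3) {i j : ZMod m}
    (h : i.val < j.val) : blkA f k i j ∈ famA f := by
  refine Finset.mem_image.2 ⟨(k, (i, j)), ?_, rfl⟩
  simp [Finset.mem_product, Finset.mem_filter, h]

lemma blkA_card (f : Fin 3 → ZMod m ≃ ZMod m) (k : Fin 3) {i j : ZMod m}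
    (hij : i ≠ j) : (blkA f k i j).card = 3 := by
  refine Finset.card_eq_three.2 ⟨(i,k), (j,k), (f k (i+j), k+1), ?_, ?_, ?_, rfl⟩
  · simp [hij]
  · exact fun h => fin3_succ_ne k (congrArg Prod.snd h).symm
  · exact fun h => fin3_succ_ne k (congrArg Prod.snd h).symm

lemma famA_card_3 (f : Fin 3 → ZMod m ≃ ZMod m) {B : Finset (Pt m)}
    (hBmem : B ∈ famA f) : B.card = 3 := by
  obtain ⟨x, hmem, rfl⟩ := Finset.mem_image.1 hBmem
  simp only [Finset.mem_product, Finset.mem_filter] at hmem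
  exact blkA_card f x.1 (fun h => by rw [h] at hmem; exact lt_irrefl _ hmem.2.2)

/-- any same-level pair is covered by `famA`. -/
lemma famA_cover_same (f : Fin 3 → ZMod m ≃ ZMod m) (k : Fin 3) {a b : ZMod m}
    (hab : a ≠ b) : ∃ B ∈ famA f, (a, k) ∈ B ∧ (b, k) ∈ B := by
  rcases Nat.lt_trichotomy a.val b.val with h | h | h
  · exact ⟨blkA f k a b, blkA_mem_famA f k h, by simp [blkA], by simp [blkA]⟩
  · exact absurd (val_inj h) hab
  · exact ⟨blkA f k b a, blkA_mem_famA f k h, by simp [blkA], by simp [blkA]⟩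

/-- any cross-level pair `(a,k),(b,k+1)` with `b ≠ f k (a+a)` is covered by `famA`. -/
lemma famA_cover_cross (f : Fin 3 → ZMod m ≃ ZMod m) (k : Fin 3) {a b : ZMod m}
    (hb : b ≠ f k (a + a)) : ∃ B ∈ famA f, (a, k) ∈ B ∧ (b, k + 1) ∈ B := by
  set j : ZMod m := (f k).symm b - a with hj
  have haj : a ≠ j := by
    intro h
    apply hb
    have h2 : (f k).symm b - a = a := by rw [← hj, ← h]
    rw [sub_eq_iff_eq_add] at h2
    have h3 : (f k).symm b = a + a := by rw [h2]
    rw [← h3, Equiv.apply_symm_apply]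
  have hsum : ∀ p : ZMod m, p = a + j ∨ p = j + a → f k p = b := by
    rintro p (rfl | rfl)
    · rw [hj]; rw [show a + ((f k).symm b - a) = (f k).symm b by ring, Equiv.apply_symm_apply]
    · rw [hj]; rw [show (f k).symm b - a + a = (f k).symm b by ring, Equiv.apply_symm_apply]
  rcases Nat.lt_trichotomy a.val j.val with h | h | h
  · refine ⟨blkA f k a j, blkA_mem_famA f k h, by simp [blkA], ?_⟩
    have : f k (a + j) = b := hsum _ (Or.inl rfl)
    simp [blkA, this]
  · exact absurd (val_inj h) haj
  · refine ⟨blkA f k j a, blkA_mem_famA f k h, by simp [blkA], ?_⟩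
    have : f k (j + a) = b := hsum _ (Or.inr rfl)
    simp [blkA, this]

lemma famA_card_le (f : Fin 3 → ZMod m ≃ ZMod m) :
    (famA f).card ≤ 3 * (m * (m - 1) / 2) := by
  refine le_trans Finset.card_image_le ?_
  rw [Finset.card_product, Finset.card_univ, Fintype.card_fin]
  have hfil : ((Finset.univ ×ˢ Finset.univ).filter
      (fun p : ZMod m × ZMod m => p.1.val < p.2.val)).card ≤ m * (m - 1) / 2 := by
    have hle : ((Finset.univ ×ˢ Finset.univ).filter
        (fun p : ZMod m × ZMod m => p.1.val < p.2.val)).card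
        ≤ ((Finset.univ : Finset (ZMod m)).powersetCard 2).card := by
      refine Finset.card_le_card_of_injOn (fun p => ({p.1, p.2} : Finset (ZMod m))) ?_ ?_
      · intro p hp
        simp only [Finset.mem_coe, Finset.mem_filter] at hp
        refine Finset.mem_powersetCard.2 ⟨Finset.subset_univ _, Finset.card_pair ?_⟩
        exact fun h => absurd (congrArg ZMod.val h) (Nat.ne_of_lt hp.2)
      · intro p hp q hq h
        simp only [Finset.mem_coe, Finset.mem_filter] at hp hq
        rcases pair_eq h with ⟨h1, h2⟩ | ⟨h1, h2⟩
        · exact Prod.ext h1 h2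
        · exfalso; rw [h1, h2] at hp; omega
    rwa [Finset.card_powersetCard, Finset.card_univ, ZMod.card, Nat.choose_two_right] at hle
  omega

lemma transfer {α : Type} [DecidableEq α] [Fintype α] (F : Finset (Finset α))
    (hB : ∀ B ∈ F, B.card = 3)
    (hcov : ∀ x y : α, x ≠ y → ∃ B ∈ F, x ∈ B ∧ y ∈ B) :
    ∃ X A, IsCovering (Fintype.card α) X A ∧ A.card ≤ F.card := by
  classical
  let g : α → ℕ := fun a => (Fintype.equivFin α a : ℕ)
  have hg : Function.Injective g := fun a b h =>
    (Fintype.equivFin α).injective (Fin.val_injective h)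
  refine ⟨Finset.univ.image g, F.image (Finset.image g), ⟨?_, ?_, ?_⟩,
    Finset.card_image_le⟩
  · rw [Finset.card_image_of_injective _ hg, Finset.card_univ]
  · intro B hBmem
    obtain ⟨C, hC, rfl⟩ := Finset.mem_image.1 hBmem
    exact ⟨Finset.image_subset_image (Finset.subset_univ C),
      by rw [Finset.card_image_of_injective _ hg, hB C hC]⟩
  · intro x hx y hy hxy
    obtain ⟨a, _, rfl⟩ := Finset.mem_image.1 hx
    obtain ⟨b, _, rfl⟩ := Finset.mem_image.1 hy
    obtain ⟨B, hBF, haB, hbB⟩ := hcov a b (fun h => hxy (by rw [h]))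
    exact ⟨B.image g, Finset.mem_image_of_mem _ hBF, Finset.mem_image_of_mem _ haB,
      Finset.mem_image_of_mem _ hbB⟩

end FH


namespace FH

section Case3

variable (t : ℕ)

abbrev M3 (t : ℕ) : ℕ := 2 * t + 1

instance : NeZero (M3 t) := ⟨by show 2 * t + 1 ≠ 0; omega⟩

lemma key3 : (2 : ZMod (M3 t)) * ((t : ZMod (M3 t)) + 1) = 1 := by
  have h0 : ((2 * t + 1 : ℕ) : ZMod (M3 t)) = 0 := ZMod.natCast_self _
  push_cast at h0
  linear_combination h0

noncomputable def halfEquiv : ZMod (M3 t) ≃ ZMod (M3 t) where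
  toFun := fun z => ((t : ZMod (M3 t)) + 1) * z
  invFun := fun z => 2 * z
  left_inv := fun z => by
    simp only
    linear_combination z * key3 t
  right_inv := fun z => by
    simp only
    linear_combination z * key3 t

lemma halfEquiv_double (a : ZMod (M3 t)) : halfEquiv t (a + a) = a := by
  show ((t : ZMod (M3 t)) + 1) * (a + a) = a
  linear_combination a * key3 t

noncomputable def f3 : Fin 3 → ZMod (M3 t) ≃ ZMod (M3 t) := fun _ => halfEquiv t

noncomputable def col (a : ZMod (M3 t)) : Finset (Pt (M3 t)) := {(a, 0), (a, 1), (a, 2)}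

lemma col_card (a : ZMod (M3 t)) : (col t a).card = 3 := by
  refine Finset.card_eq_three.2 ⟨(a,0), (a,1), (a,2), ?_, ?_, ?_, rfl⟩ <;>
    simp [Prod.ext_iff]

lemma mem_col (a : ZMod (M3 t)) (k : Fin 3) : (a, k) ∈ col t a := by
  fin_cases k <;> simp [col]

noncomputable def famC : Finset (Finset (Pt (M3 t))) := Finset.univ.image (col t)

noncomputable def fam3 : Finset (Finset (Pt (M3 t))) := famA (f3 t) ∪ famC t

lemma fam3_cross (a b : ZMod (M3 t)) (k : Fin 3) :
    ∃ B ∈ fam3 t, (a, k) ∈ B ∧ (b, k + 1) ∈ B := by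
  by_cases hb : b = f3 t k (a + a)
  · rw [hb, f3, halfEquiv_double]
    exact ⟨col t a, Finset.mem_union_right _ (Finset.mem_image_of_mem _ (Finset.mem_univ a)),
      mem_col t a k, mem_col t a (k + 1)⟩
  · obtain ⟨B, hBmem, h1, h2⟩ := famA_cover_cross (f3 t) k hb
    exact ⟨B, Finset.mem_union_left _ hBmem, h1, h2⟩

lemma fam3_cover : ∀ x y : Pt (M3 t), x ≠ y → ∃ B ∈ fam3 t, x ∈ B ∧ y ∈ B := by
  rintro ⟨a, k⟩ ⟨b, l⟩ hxy
  by_cases hk : k = l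
  · subst hk
    have hab : a ≠ b := fun h => hxy (by rw [h])
    obtain ⟨B, hBmem, h1, h2⟩ := famA_cover_same (f3 t) k hab
    exact ⟨B, Finset.mem_union_left _ hBmem, h1, h2⟩
  · rcases fin3_cases hk with h | h
    · rw [h]; exact fam3_cross t a b k
    · obtain ⟨B, hBmem, h1, h2⟩ := fam3_cross t b a l
      rw [← h] at h2
      exact ⟨B, hBmem, h2, h1⟩

lemma fam3_card3 : ∀ B ∈ fam3 t, B.card = 3 := by
  intro B hBmem
  rcases Finset.mem_union.1 hBmem with h | h
  · exact famA_card_3 _ h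
  · obtain ⟨a, _, rfl⟩ := Finset.mem_image.1 h
    exact col_card t a

lemma fam3_card_le : (fam3 t).card ≤ tgt (6 * t + 3) := by
  have h1 : (fam3 t).card ≤ (famA (f3 t)).card + (famC t).card := Finset.card_union_le _ _
  have h2 := famA_card_le (f3 t)
  have h3 : (famC t).card ≤ 2 * t + 1 := by
    refine le_trans Finset.card_image_le ?_
    rw [Finset.card_univ, ZMod.card]
  have h4 : M3 t * (M3 t - 1) / 2 = (2 * t + 1) * t := by
    have e1 : M3 t * (M3 t - 1) = ((2 * t + 1) * t) * 2 := by
      show (2 * t + 1) * (2 * t + 1 - 1) = _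
      have : 2 * t + 1 - 1 = 2 * t := rfl
      rw [this]; ring
    rw [e1, Nat.mul_div_cancel _ (by norm_num : 0 < 2)]
  have h5 : tgt (6 * t + 3) = 6 * t * t + 5 * t + 1 := by
    unfold tgt
    have e1 : (6 * t + 3) / 2 = 3 * t + 1 := by omega
    rw [e1]
    have e2 : (6 * t + 3) * (3 * t + 1) + 2 = 3 * (6 * t * t + 5 * t + 1) + 2 := by ring
    rw [e2]
    generalize 6 * t * t + 5 * t + 1 = X
    omega
  rw [h4] at h2
  rw [h5]
  have : 3 * ((2 * t + 1) * t) + (2 * t + 1) = 6 * t * t + 5 * t + 1 := by ring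
  omega

lemma exists_cover_3 : ∃ X A, IsCovering (6 * t + 3) X A ∧ A.card ≤ tgt (6 * t + 3) := by
  have hcard : Fintype.card (Pt (M3 t)) = 6 * t + 3 := by
    rw [Fintype.card_prod, ZMod.card, Fintype.card_fin]
    show (2 * t + 1) * 3 = 6 * t + 3
    ring
  obtain ⟨X, A, hcov, hle⟩ := transfer (fam3 t) (fam3_card3 t) (fam3_cover t)
  rw [hcard] at hcov
  exact ⟨X, A, hcov, le_trans hle (fam3_card_le t)⟩

end Case3

end FH


namespace FH

lemma star_extend {u : ℕ} (hu : 3 ≤ u) (hodd : u % 2 = 1) {X : Finset ℕ}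
    {A : Finset (Finset ℕ)} (h : IsCovering u X A) :
    ∃ X' A', IsCovering (u + 1) X' A' ∧ A'.card ≤ A.card + (u + 1) / 2 := by
  classical
  obtain ⟨hX, hB, hcov⟩ := h
  set inf : ℕ := X.sup id + 1 with hinf
  have hninf : inf ∉ X := by
    intro hmem
    have := Finset.le_sup (f := id) hmem
    simp only [id] at this
    omega
  have hupos : 0 < u := by omega
  set e := X.orderEmbOfFin hX with he
  have hemem : ∀ i, e i ∈ X := fun i => Finset.orderEmbOfFin_mem X hX i
  have hesurj : ∀ x ∈ X, ∃ i : Fin u, e i = x := by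
    intro x hx
    have hr := Finset.range_orderEmbOfFin X hX
    have : x ∈ Set.range (X.orderEmbOfFin hX) := by rw [hr]; exact hx
    exact this
  set blk : ℕ → Finset ℕ := fun i =>
    {inf, e ⟨2 * i % u, Nat.mod_lt _ hupos⟩, e ⟨(2 * i + 1) % u, Nat.mod_lt _ hupos⟩} with hblk
  set A' : Finset (Finset ℕ) := A ∪ (Finset.range ((u + 1) / 2)).image blk with hA'
  have hblkcard : ∀ i, (blk i).card = 3 := by
    intro i
    refine Finset.card_eq_three.2 ⟨_, _, _, ?_, ?_, ?_, rfl⟩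
    · exact fun hcon => hninf (hcon ▸ hemem _)
    · exact fun hcon => hninf (hcon ▸ hemem _)
    · intro hcon
      have heq := e.injective hcon
      simp only [Fin.mk.injEq] at heq
      have h2 : 2 * i % u = (2 * i + 1) % u := heq
      have hr : 2 * i % u < u := Nat.mod_lt _ hupos
      have hadd : (2 * i + 1) % u = (2 * i % u + 1 % u) % u := Nat.add_mod _ _ _
      have h1u : 1 % u = 1 := Nat.mod_eq_of_lt (by omega)
      rw [h1u] at hadd
      by_cases hcase : 2 * i % u + 1 = u
      · rw [hcase, Nat.mod_self] at hadd
        omega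
      · rw [Nat.mod_eq_of_lt (show 2 * i % u + 1 < u by omega)] at hadd
        omega
  refine ⟨insert inf X, A', ⟨?_, ?_, ?_⟩, ?_⟩
  · rw [Finset.card_insert_of_notMem hninf, hX]
  · intro B hBmem
    rcases Finset.mem_union.1 hBmem with hmem | hmem
    · exact ⟨(hB B hmem).1.trans (Finset.subset_insert _ _), (hB B hmem).2⟩
    · obtain ⟨i, _, rfl⟩ := Finset.mem_image.1 hmem
      constructor
      · intro z hz
        simp only [hblk, Finset.mem_insert, Finset.mem_singleton] at hz
        rcases hz with rfl | rfl | rfl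
        · exact Finset.mem_insert_self _ _
        · exact Finset.mem_insert_of_mem (hemem _)
        · exact Finset.mem_insert_of_mem (hemem _)
      · exact hblkcard i
  · have hcovinf : ∀ x ∈ X, ∃ B ∈ A', inf ∈ B ∧ x ∈ B := by
      intro x hx
      obtain ⟨j, rfl⟩ := hesurj x hx
      have hjlt : (j : ℕ) < u := j.isLt
      refine ⟨blk ((j : ℕ) / 2), Finset.mem_union_right _
        (Finset.mem_image_of_mem _ (Finset.mem_range.2 (by omega))), ?_, ?_⟩
      · simp [hblk]
      · simp only [hblk, Finset.mem_insert, Finset.mem_singleton]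
        rcases Nat.even_or_odd (j : ℕ) with ⟨c, hc⟩ | ⟨c, hc⟩
        · refine Or.inr (Or.inl (congrArg e ?_))
          have h1 : 2 * ((j : ℕ) / 2) % u = (j : ℕ) := by
            rw [Nat.mod_eq_of_lt (by omega)]; omega
          exact Fin.ext (by simpa using h1.symm)
        · refine Or.inr (Or.inr (congrArg e ?_))
          have h1 : (2 * ((j : ℕ) / 2) + 1) % u = (j : ℕ) := by
            rw [Nat.mod_eq_of_lt (by omega)]; omega
          exact Fin.ext (by simpa using h1.symm)
    intro x hx y hy hxy
    rcases Finset.mem_insert.1 hx with rfl | hx'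
    · rcases Finset.mem_insert.1 hy with rfl | hy'
      · exact absurd rfl hxy
      · obtain ⟨B, h1, h2, h3⟩ := hcovinf y hy'
        exact ⟨B, h1, h2, h3⟩
    · rcases Finset.mem_insert.1 hy with rfl | hy'
      · obtain ⟨B, h1, h2, h3⟩ := hcovinf x hx'
        exact ⟨B, h1, h3, h2⟩
      · obtain ⟨B, h1, h2, h3⟩ := hcov x hx' y hy' hxy
        exact ⟨B, Finset.mem_union_left _ h1, h2, h3⟩
  · refine le_trans (Finset.card_union_le _ _) ?_
    have := Finset.card_image_le (s := Finset.range ((u + 1) / 2)) (f := blk)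
    rw [Finset.card_range] at this
    omega

end FH


namespace FH

section Sigma
-- m = 2*h, h = t+1 ≥ 1
variable (t : ℕ)

abbrev ME (t : ℕ) : ℕ := 2 * t + 2

instance : NeZero (ME t) := ⟨by show 2 * t + 2 ≠ 0; omega⟩

/-- the half of the modulus -/
abbrev hf (t : ℕ) : ℕ := t + 1

noncomputable def sigmaFun : ZMod (ME t) → ZMod (ME t) := fun z =>
  if z.val % 2 = 0 then ((z.val / 2 : ℕ) : ZMod (ME t))
  else ((z.val / 2 + hf t : ℕ) : ZMod (ME t))

lemma sigmaFun_val (z : ZMod (ME t)) :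
    (sigmaFun t z).val = if z.val % 2 = 0 then z.val / 2 else z.val / 2 + hf t := by
  have hz : z.val < 2 * t + 2 := ZMod.val_lt z
  unfold sigmaFun
  split
  · exact ZMod.val_cast_of_lt (by (try simp only [ME, hf] at *); omega)
  · exact ZMod.val_cast_of_lt (by (try simp only [ME, hf] at *); omega)

lemma sigmaFun_inj : Function.Injective (sigmaFun t) := by
  intro z1 z2 h
  have h1 := sigmaFun_val t z1
  have h2 := sigmaFun_val t z2
  rw [h] at h1
  rw [h1] at h2
  have hz1 : z1.val < 2 * t + 2 := ZMod.val_lt z1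
  have hz2 : z2.val < 2 * t + 2 := ZMod.val_lt z2
  apply val_inj
  (try simp only [ME, hf] at h2)
  split at h2 <;> split at h2 <;> omega

noncomputable def sigma : ZMod (ME t) ≃ ZMod (ME t) :=
  Equiv.ofBijective (sigmaFun t) (Finite.injective_iff_bijective.1 (sigmaFun_inj t))

lemma sigma_apply (z : ZMod (ME t)) : sigma t z = sigmaFun t z := rfl

lemma val_add_self (a : ZMod (ME t)) :
    (a + a).val = if a.val < hf t then 2 * a.val else 2 * a.val - (2 * t + 2) := by
  have hz : a.val < 2 * t + 2 := ZMod.val_lt a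
  rw [ZMod.val_add]
  show (a.val + a.val) % (2 * t + 2) = _
  split
  · rw [Nat.mod_eq_of_lt (by (try simp only [ME, hf] at *); omega)]
    omega
  · have e1 : a.val + a.val = (2 * a.val - (2 * t + 2)) + 1 * (2 * t + 2) := by
      (try simp only [ME, hf] at *); omega
    rw [e1, Nat.add_mul_mod_self_right, Nat.mod_eq_of_lt (by (try simp only [ME, hf] at *); omega)]

lemma sigma_double_val (a : ZMod (ME t)) :
    (sigma t (a + a)).val = if a.val < hf t then a.val else a.val - hf t := by
  have hz : a.val < 2 * t + 2 := ZMod.val_lt a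
  have hv := sigmaFun_val t (a + a)
  have hs := val_add_self t a
  rw [hs] at hv
  rw [show (sigma t (a+a)).val = (sigmaFun t (a+a)).val from rfl, hv]
  (try simp only [ME, hf] at *)
  split <;> split <;> omega

lemma sigma_double_lt {a : ZMod (ME t)} (h : a.val < hf t) : sigma t (a + a) = a := by
  apply val_inj
  rw [sigma_double_val, if_pos h]

lemma cast_sub_hf {a : ZMod (ME t)} (h : hf t ≤ a.val) :
    ((a.val - hf t : ℕ) : ZMod (ME t)) = a - (hf t : ZMod (ME t)) := by
  rw [Nat.cast_sub h, ZMod.natCast_rightInverse a]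

lemma val_sub_hf {a : ZMod (ME t)} (h : hf t ≤ a.val) :
    (a - (hf t : ZMod (ME t))).val = a.val - hf t := by
  rw [← cast_sub_hf t h]
  exact ZMod.val_cast_of_lt (by have := ZMod.val_lt a; (try simp only [ME, hf] at *); omega)

lemma sigma_double_ge {a : ZMod (ME t)} (h : hf t ≤ a.val) :
    sigma t (a + a) = a - (hf t : ZMod (ME t)) := by
  apply val_inj
  rw [sigma_double_val, if_neg (by omega), val_sub_hf t h]

lemma val_add_hf {s : ZMod (ME t)} (h : s.val < hf t) :
    (s + (hf t : ZMod (ME t))).val = s.val + hf t := by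
  rw [ZMod.val_add, ZMod.val_cast_of_lt (show hf t < ME t by (try simp only [ME, hf] at *); omega)]
  exact Nat.mod_eq_of_lt (by (try simp only [ME, hf] at *); omega)

lemma hf_ne_zero : (hf t : ZMod (ME t)) ≠ 0 := by
  intro hcon
  have := congrArg ZMod.val hcon
  rw [ZMod.val_cast_of_lt (show hf t < ME t by (try simp only [ME, hf] at *); omega), ZMod.val_zero] at this
  (try simp only [ME, hf] at *); omega

end Sigma

section Case0
variable (t : ℕ)

noncomputable def f0 : Fin 3 → ZMod (ME t) ≃ ZMod (ME t) := fun _ => sigma t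

noncomputable def blkB (s : ZMod (ME t)) (k : Fin 3) : Finset (Pt (ME t)) :=
  {(s, k), (s + (hf t : ZMod (ME t)), k), (s, k + 1)}

noncomputable def famB : Finset (Finset (Pt (ME t))) :=
  ((Finset.univ.filter (fun s : ZMod (ME t) => s.val < hf t)) ×ˢ
    (Finset.univ : Finset (Fin 3))).image (fun p => blkB t p.1 p.2)

lemma blkB_mem {s : ZMod (ME t)} (h : s.val < hf t) (k : Fin 3) : blkB t s k ∈ famB t := by
  refine Finset.mem_image.2 ⟨(s, k), ?_, rfl⟩
  simp [Finset.mem_product, Finset.mem_filter, h, Nat.le_of_lt_succ h]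

lemma blkB_card (s : ZMod (ME t)) (k : Fin 3) : (blkB t s k).card = 3 := by
  refine Finset.card_eq_three.2 ⟨_, _, _, ?_, ?_, ?_, rfl⟩
  · intro hcon
    rw [Prod.ext_iff] at hcon
    have := hcon.1
    exact hf_ne_zero t (by linear_combination this.symm)
  · exact fun hcon => fin3_succ_ne k ((Prod.ext_iff.1 hcon).2).symm
  · intro hcon
    exact fin3_succ_ne k ((Prod.ext_iff.1 hcon).2).symm

noncomputable def fam0 : Finset (Finset (Pt (ME t))) := famA (f0 t) ∪ famB t

lemma fam0_cross (a b : ZMod (ME t)) (k : Fin 3) :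
    ∃ B ∈ fam0 t, (a, k) ∈ B ∧ (b, k + 1) ∈ B := by
  by_cases hb : b = f0 t k (a + a)
  · subst hb
    by_cases ha : a.val < hf t
    · rw [show f0 t k (a + a) = a from sigma_double_lt t ha]
      exact ⟨blkB t a k, Finset.mem_union_right _ (blkB_mem t ha k),
        by simp [blkB], by simp [blkB]⟩
    · push_neg at ha
      rw [show f0 t k (a + a) = a - (hf t : ZMod (ME t)) from sigma_double_ge t ha]
      have hsv : (a - (hf t : ZMod (ME t))).val < hf t := by
        rw [val_sub_hf t ha]
        have := ZMod.val_lt a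
        (try simp only [ME, hf] at *); omega
      refine ⟨blkB t (a - (hf t : ZMod (ME t))) k, Finset.mem_union_right _ (blkB_mem t hsv k),
        ?_, by simp [blkB]⟩
      have : a - (hf t : ZMod (ME t)) + (hf t : ZMod (ME t)) = a := by ring
      simp [blkB, this]
  · obtain ⟨B, hBmem, h1, h2⟩ := famA_cover_cross (f0 t) k hb
    exact ⟨B, Finset.mem_union_left _ hBmem, h1, h2⟩

lemma fam0_cover : ∀ x y : Pt (ME t), x ≠ y → ∃ B ∈ fam0 t, x ∈ B ∧ y ∈ B := by
  rintro ⟨a, k⟩ ⟨b, l⟩ hxy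
  by_cases hk : k = l
  · subst hk
    have hab : a ≠ b := fun h => hxy (by rw [h])
    obtain ⟨B, hBmem, h1, h2⟩ := famA_cover_same (f0 t) k hab
    exact ⟨B, Finset.mem_union_left _ hBmem, h1, h2⟩
  · rcases fin3_cases hk with h | h
    · rw [h]; exact fam0_cross t a b k
    · obtain ⟨B, hBmem, h1, h2⟩ := fam0_cross t b a l
      rw [← h] at h2
      exact ⟨B, hBmem, h2, h1⟩

lemma fam0_card3 : ∀ B ∈ fam0 t, B.card = 3 := by
  intro B hBmem
  rcases Finset.mem_union.1 hBmem with h | h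
  · exact famA_card_3 _ h
  · obtain ⟨p, _, rfl⟩ := Finset.mem_image.1 h
    exact blkB_card t p.1 p.2

lemma filter_val_lt_card :
    (Finset.univ.filter (fun s : ZMod (ME t) => s.val < hf t)).card ≤ hf t := by
  have hle : (Finset.univ.filter (fun s : ZMod (ME t) => s.val < hf t)).card
      ≤ (Finset.range (hf t)).card := by
    refine Finset.card_le_card_of_injOn (fun s => s.val) ?_ ?_
    · intro s hs
      rw [Finset.mem_coe, Finset.mem_filter] at hs
      exact Finset.mem_range.2 hs.2
    · intro s _ r _ h
      exact val_inj h
  rwa [Finset.card_range] at hle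

lemma fam0_card_le : (fam0 t).card ≤ tgt (6 * t + 6) := by
  have h1 : (fam0 t).card ≤ (famA (f0 t)).card + (famB t).card := Finset.card_union_le _ _
  have h2 := famA_card_le (f0 t)
  have h3 : (famB t).card ≤ (t + 1) * 3 := by
    refine le_trans Finset.card_image_le ?_
    rw [Finset.card_product, Finset.card_univ, Fintype.card_fin]
    exact Nat.mul_le_mul_right 3 (filter_val_lt_card t)
  have h4 : ME t * (ME t - 1) / 2 = (t + 1) * (2 * t + 1) := by
    have e1 : ME t * (ME t - 1) = ((t + 1) * (2 * t + 1)) * 2 := by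
      show (2 * t + 2) * (2 * t + 2 - 1) = _
      have e0 : 2 * t + 2 - 1 = 2 * t + 1 := rfl
      rw [e0]; ring
    rw [e1, Nat.mul_div_cancel _ (by norm_num : 0 < 2)]
  have h5 : tgt (6 * t + 6) = 6 * (t+1) * (t+1) := by
    unfold tgt
    have e1 : (6 * t + 6) / 2 = 3 * t + 3 := by omega
    rw [e1]
    have e2 : (6 * t + 6) * (3 * t + 3) + 2 = 3 * (6 * (t+1) * (t+1)) + 2 := by ring
    rw [e2]
    generalize 6 * (t+1) * (t+1) = X
    omega
  rw [h4] at h2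
  rw [h5]
  have : 3 * ((t + 1) * (2 * t + 1)) + (t + 1) * 3 = 6 * (t+1) * (t+1) := by ring
  omega

lemma exists_cover_0 (t : ℕ) : ∃ X A, IsCovering (6 * t + 6) X A ∧ A.card ≤ tgt (6 * t + 6) := by
  have hcard : Fintype.card (Pt (ME t)) = 6 * t + 6 := by
    rw [Fintype.card_prod, ZMod.card, Fintype.card_fin]
    show (2 * t + 2) * 3 = 6 * t + 6
    ring
  obtain ⟨X, A, hcov, hle⟩ := transfer (fam0 t) (fam0_card3 t) (fam0_cover t)
  rw [hcard] at hcov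
  exact ⟨X, A, hcov, le_trans hle (fam0_card_le t)⟩

end Case0

end FH


namespace FH

section Case1
variable (t : ℕ)

abbrev OPt (t : ℕ) := Option (Pt (ME t))

noncomputable def f1 : Fin 3 → ZMod (ME t) ≃ ZMod (ME t) := fun _ => sigma t

noncomputable def liftB (B : Finset (Pt (ME t))) : Finset (OPt t) := B.image some

noncomputable def famA1 : Finset (Finset (OPt t)) := (famA (f1 t)).image (liftB t)

noncomputable def col1 (a : ZMod (ME t)) : Finset (OPt t) := {some (a, 0), some (a, 1), some (a, 2)}

noncomputable def famC1 : Finset (Finset (OPt t)) :=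
  (Finset.univ.filter (fun a : ZMod (ME t) => a.val < hf t)).image (col1 t)

noncomputable def blkD (a : ZMod (ME t)) (k : Fin 3) : Finset (OPt t) :=
  {none, some (a, k), some (a - (hf t : ZMod (ME t)), k + 1)}

noncomputable def famD : Finset (Finset (OPt t)) :=
  ((Finset.univ.filter (fun a : ZMod (ME t) => hf t ≤ a.val)) ×ˢ
    (Finset.univ : Finset (Fin 3))).image (fun p => blkD t p.1 p.2)

noncomputable def fam1 : Finset (Finset (OPt t)) := famA1 t ∪ famC1 t ∪ famD t

lemma blkD_mem {a : ZMod (ME t)} (h : hf t ≤ a.val) (k : Fin 3) : blkD t a k ∈ fam1 t := by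
  refine Finset.mem_union_right _ (Finset.mem_image.2 ⟨(a, k), ?_, rfl⟩)
  simp [Finset.mem_product, Finset.mem_filter, h, Nat.lt_of_succ_le h]

lemma col1_mem {a : ZMod (ME t)} (h : a.val < hf t) : col1 t a ∈ fam1 t :=
  Finset.mem_union_left _ (Finset.mem_union_right _
    (Finset.mem_image.2 ⟨a, Finset.mem_filter.2 ⟨Finset.mem_univ a, h⟩, rfl⟩))

lemma mem_col1 (a : ZMod (ME t)) (k : Fin 3) : some (a, k) ∈ col1 t a := by
  fin_cases k <;> simp [col1]

lemma liftB_mem {B : Finset (Pt (ME t))} (h : B ∈ famA (f1 t)) : liftB t B ∈ fam1 t :=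
  Finset.mem_union_left _ (Finset.mem_union_left _ (Finset.mem_image_of_mem _ h))

lemma fam1_cross (a b : ZMod (ME t)) (k : Fin 3) :
    ∃ B ∈ fam1 t, some (a, k) ∈ B ∧ some (b, k + 1) ∈ B := by
  by_cases hb : b = f1 t k (a + a)
  · subst hb
    by_cases ha : a.val < hf t
    · rw [show f1 t k (a + a) = a from sigma_double_lt t ha]
      exact ⟨col1 t a, col1_mem t ha, mem_col1 t a k, mem_col1 t a (k + 1)⟩
    · push_neg at ha
      rw [show f1 t k (a + a) = a - (hf t : ZMod (ME t)) from sigma_double_ge t ha]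
      exact ⟨blkD t a k, blkD_mem t ha k, by simp [blkD], by simp [blkD]⟩
  · obtain ⟨B, hBmem, h1, h2⟩ := famA_cover_cross (f1 t) k hb
    exact ⟨liftB t B, liftB_mem t hBmem, Finset.mem_image_of_mem _ h1,
      Finset.mem_image_of_mem _ h2⟩

lemma fam1_inf (a : ZMod (ME t)) (k : Fin 3) :
    ∃ B ∈ fam1 t, (none : OPt t) ∈ B ∧ some (a, k) ∈ B := by
  by_cases ha : hf t ≤ a.val
  · exact ⟨blkD t a k, blkD_mem t ha k, by simp [blkD], by simp [blkD]⟩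
  · push_neg at ha
    have hval : (a + (hf t : ZMod (ME t))).val = a.val + hf t := val_add_hf t ha
    have hge : hf t ≤ (a + (hf t : ZMod (ME t))).val := by omega
    refine ⟨blkD t (a + (hf t : ZMod (ME t))) (k - 1), blkD_mem t hge (k - 1),
      by simp [blkD], ?_⟩
    have e1 : a + (hf t : ZMod (ME t)) - (hf t : ZMod (ME t)) = a := by ring
    have e2 : k - 1 + 1 = k := sub_add_cancel k 1
    simp [blkD, e1, e2]

lemma fam1_cover : ∀ x y : OPt t, x ≠ y → ∃ B ∈ fam1 t, x ∈ B ∧ y ∈ B := by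
  intro x y hxy
  match x, y with
  | none, none => exact absurd rfl hxy
  | none, some (a, k) => exact fam1_inf t a k
  | some (a, k), none =>
    obtain ⟨B, h1, h2, h3⟩ := fam1_inf t a k
    exact ⟨B, h1, h3, h2⟩
  | some (a, k), some (b, l) =>
    by_cases hk : k = l
    · subst hk
      have hab : a ≠ b := fun h => hxy (by rw [h])
      obtain ⟨B, hBmem, h1, h2⟩ := famA_cover_same (f1 t) k hab
      exact ⟨liftB t B, liftB_mem t hBmem, Finset.mem_image_of_mem _ h1,
        Finset.mem_image_of_mem _ h2⟩
    · rcases fin3_cases hk with h | h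
      · rw [h]; exact fam1_cross t a b k
      · obtain ⟨B, hBmem, h1, h2⟩ := fam1_cross t b a l
        rw [← h] at h2
        exact ⟨B, hBmem, h2, h1⟩

lemma fam1_card3 : ∀ B ∈ fam1 t, B.card = 3 := by
  intro B hBmem
  rcases Finset.mem_union.1 hBmem with h | h
  · rcases Finset.mem_union.1 h with h' | h'
    · obtain ⟨C, hC, rfl⟩ := Finset.mem_image.1 h'
      rw [liftB, Finset.card_image_of_injective _ (Option.some_injective _)]
      exact famA_card_3 _ hC
    · obtain ⟨a, _, rfl⟩ := Finset.mem_image.1 h'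
      refine Finset.card_eq_three.2 ⟨_, _, _, ?_, ?_, ?_, rfl⟩ <;>
        simp [Prod.ext_iff]
  · obtain ⟨p, _, rfl⟩ := Finset.mem_image.1 h
    refine Finset.card_eq_three.2 ⟨_, _, _, ?_, ?_, ?_, rfl⟩
    · simp
    · simp
    · intro hcon
      rw [Option.some.injEq, Prod.ext_iff] at hcon
      exact fin3_succ_ne p.2 hcon.2.symm

lemma filter_val_ge_card :
    (Finset.univ.filter (fun s : ZMod (ME t) => hf t ≤ s.val)).card ≤ hf t := by
  have hle : (Finset.univ.filter (fun s : ZMod (ME t) => hf t ≤ s.val)).card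
      ≤ (Finset.range (hf t)).card := by
    refine Finset.card_le_card_of_injOn (fun s => s.val - hf t) ?_ ?_
    · intro s hs
      rw [Finset.mem_coe, Finset.mem_filter] at hs
      have := ZMod.val_lt s
      refine Finset.mem_range.2 ?_
      simp only [ME, hf] at *
      omega
    · intro s hs r hr h
      rw [Finset.mem_coe, Finset.mem_filter] at hs hr
      simp only at h
      exact val_inj (by omega)
  rwa [Finset.card_range] at hle

lemma fam1_card_le : (fam1 t).card ≤ tgt (6 * t + 7) := by
  have h1 : (fam1 t).card ≤ (famA1 t).card + (famC1 t).card + (famD t).card :=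
    le_trans (Finset.card_union_le _ _) (by
      have := Finset.card_union_le (famA1 t) (famC1 t)
      omega)
  have h2 : (famA1 t).card ≤ 3 * (ME t * (ME t - 1) / 2) :=
    le_trans Finset.card_image_le (famA_card_le (f1 t))
  have h3 : (famC1 t).card ≤ hf t :=
    le_trans Finset.card_image_le (filter_val_lt_card t)
  have h4 : (famD t).card ≤ hf t * 3 := by
    refine le_trans Finset.card_image_le ?_
    rw [Finset.card_product, Finset.card_univ, Fintype.card_fin]
    exact Nat.mul_le_mul_right 3 (filter_val_ge_card t)
  have h5 : ME t * (ME t - 1) / 2 = (t + 1) * (2 * t + 1) := by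
    have e1 : ME t * (ME t - 1) = ((t + 1) * (2 * t + 1)) * 2 := by
      show (2 * t + 2) * (2 * t + 2 - 1) = _
      have e0 : 2 * t + 2 - 1 = 2 * t + 1 := rfl
      rw [e0]; ring
    rw [e1, Nat.mul_div_cancel _ (by norm_num : 0 < 2)]
  have h6 : tgt (6 * t + 7) = 6 * t * t + 13 * t + 7 := by
    unfold tgt
    have e1 : (6 * t + 7) / 2 = 3 * t + 3 := by omega
    rw [e1]
    have e2 : (6 * t + 7) * (3 * t + 3) + 2 = 3 * (6 * t * t + 13 * t + 7) + 2 := by ring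
    rw [e2]
    generalize 6 * t * t + 13 * t + 7 = X
    omega
  rw [h5] at h2
  rw [h6]
  have e3 : 3 * ((t + 1) * (2 * t + 1)) + hf t + hf t * 3 = 6 * t * t + 13 * t + 7 := by
    show 3 * ((t + 1) * (2 * t + 1)) + (t + 1) + (t + 1) * 3 = _
    ring
  omega

lemma exists_cover_1 (t : ℕ) : ∃ X A, IsCovering (6 * t + 7) X A ∧ A.card ≤ tgt (6 * t + 7) := by
  have hcard : Fintype.card (OPt t) = 6 * t + 7 := by
    rw [Fintype.card_option, Fintype.card_prod, ZMod.card, Fintype.card_fin]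
    show (2 * t + 2) * 3 + 1 = 6 * t + 7
    ring
  obtain ⟨X, A, hcov, hle⟩ := transfer (fam1 t) (fam1_card3 t) (fam1_cover t)
  rw [hcard] at hcov
  exact ⟨X, A, hcov, le_trans hle (fam1_card_le t)⟩

end Case1

end FH


namespace FH

section Case5
variable (t : ℕ)

abbrev SPt (t : ℕ) := Pt (M3 t) ⊕ Fin 2

noncomputable def shiftE (c : ZMod (M3 t)) : ZMod (M3 t) ≃ ZMod (M3 t) where
  toFun := fun z => ((t : ZMod (M3 t)) + 1) * z + c
  invFun := fun z => 2 * (z - c)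
  left_inv := fun z => by
    simp only
    linear_combination z * key3 t
  right_inv := fun z => by
    simp only
    linear_combination (z - c) * key3 t

noncomputable def δ5 : Fin 3 → ZMod (M3 t) := fun k => if k = 0 then 1 else 0

noncomputable def f5 : Fin 3 → ZMod (M3 t) ≃ ZMod (M3 t) := fun k => shiftE t (δ5 t k)

lemma f5_double (k : Fin 3) (a : ZMod (M3 t)) : f5 t k (a + a) = a + δ5 t k := by
  show ((t : ZMod (M3 t)) + 1) * (a + a) + δ5 t k = a + δ5 t k
  linear_combination a * key3 t

/-- the Hamiltonian cycle through the leftover pairs -/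
noncomputable def cyc (i : ℕ) : Pt (M3 t) :=
  (((i / 3 : ℕ) : ZMod (M3 t)) + (if i % 3 = 0 then 0 else 1),
    (⟨i % 3, Nat.mod_lt _ (by norm_num)⟩ : Fin 3))

lemma cyc_succ (a : ZMod (M3 t)) (k : Fin 3) :
    ∃ i, i < 6 * t + 3 ∧ cyc t i = (a, k) ∧ cyc t (i + 1) = (a + δ5 t k, k + 1) := by
  have hval : a.val < 2 * t + 1 := ZMod.val_lt a
  have hcast : ((a.val : ℕ) : ZMod (M3 t)) = a := ZMod.natCast_rightInverse a
  fin_cases k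
  · -- k = 0
    refine ⟨3 * a.val, by omega, ?_, ?_⟩
    · unfold cyc
      rw [show 3 * a.val / 3 = a.val by omega, if_pos (by omega)]
      refine Prod.ext ?_ (Fin.ext ?_)
      · simp only; rw [hcast, add_zero]
      · simp only; omega
    · unfold cyc
      rw [show (3 * a.val + 1) / 3 = a.val by omega, if_neg (by omega)]
      refine Prod.ext ?_ (Fin.ext ?_)
      · simp only [δ5]
        rw [hcast]
        norm_num
      · simp only [δ5]
        show (3 * a.val + 1) % 3 = ((0 : Fin 3) + 1).val
        omega
  · -- k = 1
    have hq : (((a - 1).val : ℕ) : ZMod (M3 t)) = a - 1 := ZMod.natCast_rightInverse _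
    have hqlt : (a - 1).val < 2 * t + 1 := ZMod.val_lt _
    refine ⟨3 * (a - 1).val + 1, by omega, ?_, ?_⟩
    · unfold cyc
      rw [show (3 * (a - 1).val + 1) / 3 = (a - 1).val by omega, if_neg (by omega)]
      refine Prod.ext ?_ (Fin.ext ?_)
      · simp only; rw [hq]; ring
      · simp only; omega
    · unfold cyc
      rw [show (3 * (a - 1).val + 1 + 1) / 3 = (a - 1).val by omega, if_neg (by omega)]
      refine Prod.ext ?_ (Fin.ext ?_)
      · simp only [δ5]
        rw [hq]
        norm_num
        try ring
      · simp only [δ5]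
        show (3 * (a - 1).val + 1 + 1) % 3 = ((1 : Fin 3) + 1).val
        omega
  · -- k = 2
    have hq : (((a - 1).val : ℕ) : ZMod (M3 t)) = a - 1 := ZMod.natCast_rightInverse _
    have hqlt : (a - 1).val < 2 * t + 1 := ZMod.val_lt _
    refine ⟨3 * (a - 1).val + 2, by omega, ?_, ?_⟩
    · unfold cyc
      rw [show (3 * (a - 1).val + 2) / 3 = (a - 1).val by omega, if_neg (by omega)]
      refine Prod.ext ?_ (Fin.ext ?_)
      · simp only; rw [hq]; ring
      · simp only; omega
    · unfold cyc
      rw [show (3 * (a - 1).val + 2 + 1) / 3 = (a - 1).val + 1 by omega, if_pos (by omega)]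
      refine Prod.ext ?_ (Fin.ext ?_)
      · simp only [δ5]
        push_cast
        rw [hq]
        norm_num
        try ring
      · simp only [δ5]
        show (3 * (a - 1).val + 2 + 1) % 3 = ((2 : Fin 3) + 1).val
        omega

noncomputable def famA5 : Finset (Finset (SPt t)) :=
  (famA (f5 t)).image (fun B => B.image Sum.inl)

noncomputable def blkJ : Finset (SPt t) := {Sum.inr 0, Sum.inr 1, Sum.inl (cyc t 0)}

noncomputable def blkH1 (i : ℕ) : Finset (SPt t) :=
  {Sum.inr 0, Sum.inl (cyc t (2 * i)), Sum.inl (cyc t (2 * i + 1))}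

noncomputable def blkH1' : Finset (SPt t) :=
  {Sum.inr 0, Sum.inl (cyc t (6 * t + 2)), Sum.inl (cyc t (6 * t + 3))}

noncomputable def blkH2 (i : ℕ) : Finset (SPt t) :=
  {Sum.inr 1, Sum.inl (cyc t (2 * i + 1)), Sum.inl (cyc t (2 * i + 2))}

noncomputable def famH1 : Finset (Finset (SPt t)) :=
  (Finset.range (3 * t + 1)).image (blkH1 t) ∪ {blkH1' t}

noncomputable def famH2 : Finset (Finset (SPt t)) :=
  (Finset.range (3 * t + 1)).image (blkH2 t)

noncomputable def fam5 : Finset (Finset (SPt t)) := famA5 t ∪ famH1 t ∪ famH2 t ∪ {blkJ t}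

lemma blkH1_mem {i : ℕ} (h : i < 3 * t + 1) : blkH1 t i ∈ fam5 t :=
  Finset.mem_union_left _ (Finset.mem_union_left _ (Finset.mem_union_right _
    (Finset.mem_union_left _ (Finset.mem_image_of_mem _ (Finset.mem_range.2 h)))))

lemma blkH1'_mem : blkH1' t ∈ fam5 t :=
  Finset.mem_union_left _ (Finset.mem_union_left _ (Finset.mem_union_right _
    (Finset.mem_union_right _ (Finset.mem_singleton_self _))))

lemma blkH2_mem {i : ℕ} (h : i < 3 * t + 1) : blkH2 t i ∈ fam5 t :=
  Finset.mem_union_left _ (Finset.mem_union_right _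
    (Finset.mem_image_of_mem _ (Finset.mem_range.2 h)))

lemma blkJ_mem : blkJ t ∈ fam5 t := Finset.mem_union_right _ (Finset.mem_singleton_self _)

lemma famA5_mem {B : Finset (Pt (M3 t))} (h : B ∈ famA (f5 t)) :
    B.image Sum.inl ∈ fam5 t :=
  Finset.mem_union_left _ (Finset.mem_union_left _ (Finset.mem_union_left _
    (Finset.mem_image_of_mem _ h)))

/-- every cycle edge `{cyc i, cyc (i+1)}`, `i < 6t+3`, lies in a hub block -/
lemma edge_cover {i : ℕ} (h : i < 6 * t + 3) :
    ∃ B ∈ fam5 t, Sum.inl (cyc t i) ∈ B ∧ Sum.inl (cyc t (i + 1)) ∈ B := by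
  rcases Nat.even_or_odd i with ⟨c, hc⟩ | ⟨c, hc⟩
  · by_cases hlast : i = 6 * t + 2
    · subst hlast
      exact ⟨blkH1' t, blkH1'_mem t, by simp [blkH1'], by simp [blkH1']⟩
    · refine ⟨blkH1 t c, blkH1_mem t (by omega), ?_, ?_⟩
      · rw [show i = 2 * c by omega]; simp [blkH1]
      · rw [show i + 1 = 2 * c + 1 by omega]; simp [blkH1]
  · refine ⟨blkH2 t c, blkH2_mem t (by omega), ?_, ?_⟩
    · rw [show i = 2 * c + 1 by omega]; simp [blkH2]
    · rw [show i + 1 = 2 * c + 2 by omega]; simp [blkH2]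

/-- ∞₀ is joined to every cycle vertex -/
lemma hub1_cover {j : ℕ} (h : j < 6 * t + 3) :
    ∃ B ∈ fam5 t, (Sum.inr 0 : SPt t) ∈ B ∧ Sum.inl (cyc t j) ∈ B := by
  by_cases hlast : j = 6 * t + 2
  · subst hlast
    exact ⟨blkH1' t, blkH1'_mem t, by simp [blkH1'], by simp [blkH1']⟩
  · rcases Nat.even_or_odd j with ⟨c, hc⟩ | ⟨c, hc⟩
    · refine ⟨blkH1 t c, blkH1_mem t (by omega), by simp [blkH1], ?_⟩
      rw [show j = 2 * c by omega]; simp [blkH1]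
    · refine ⟨blkH1 t c, blkH1_mem t (by omega), by simp [blkH1], ?_⟩
      rw [show j = 2 * c + 1 by omega]; simp [blkH1]

/-- ∞₁ is joined to every cycle vertex -/
lemma hub2_cover {j : ℕ} (h : j < 6 * t + 3) :
    ∃ B ∈ fam5 t, (Sum.inr 1 : SPt t) ∈ B ∧ Sum.inl (cyc t j) ∈ B := by
  rcases Nat.eq_zero_or_pos j with rfl | hpos
  · exact ⟨blkJ t, blkJ_mem t, by simp [blkJ], by simp [blkJ]⟩
  · rcases Nat.even_or_odd j with ⟨c, hc⟩ | ⟨c, hc⟩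
    · refine ⟨blkH2 t (c - 1), blkH2_mem t (by omega), by simp [blkH2], ?_⟩
      rw [show j = 2 * (c - 1) + 2 by omega]; simp [blkH2]
    · refine ⟨blkH2 t c, blkH2_mem t (by omega), by simp [blkH2], ?_⟩
      rw [show j = 2 * c + 1 by omega]; simp [blkH2]

lemma fam5_cross (a b : ZMod (M3 t)) (k : Fin 3) :
    ∃ B ∈ fam5 t, (Sum.inl (a, k) : SPt t) ∈ B ∧ Sum.inl (b, k + 1) ∈ B := by
  by_cases hb : b = f5 t k (a + a)
  · subst hb
    rw [f5_double]
    obtain ⟨i, hi, h1, h2⟩ := cyc_succ t a k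
    obtain ⟨B, hB, hm1, hm2⟩ := edge_cover t hi
    rw [h1] at hm1
    rw [h2] at hm2
    exact ⟨B, hB, hm1, hm2⟩
  · obtain ⟨B, hBmem, h1, h2⟩ := famA_cover_cross (f5 t) k hb
    exact ⟨B.image Sum.inl, famA5_mem t hBmem, Finset.mem_image_of_mem _ h1,
      Finset.mem_image_of_mem _ h2⟩

lemma fam5_inf (v : Fin 2) (a : ZMod (M3 t)) (k : Fin 3) :
    ∃ B ∈ fam5 t, (Sum.inr v : SPt t) ∈ B ∧ Sum.inl (a, k) ∈ B := by
  obtain ⟨i, hi, h1, _⟩ := cyc_succ t a k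
  fin_cases v
  · obtain ⟨B, hB, hm1, hm2⟩ := hub1_cover t hi
    rw [h1] at hm2
    exact ⟨B, hB, hm1, hm2⟩
  · obtain ⟨B, hB, hm1, hm2⟩ := hub2_cover t hi
    rw [h1] at hm2
    exact ⟨B, hB, hm1, hm2⟩

lemma fam5_cover : ∀ x y : SPt t, x ≠ y → ∃ B ∈ fam5 t, x ∈ B ∧ y ∈ B := by
  intro x y hxy
  match x, y with
  | Sum.inr v, Sum.inr w =>
    refine ⟨blkJ t, blkJ_mem t, ?_, ?_⟩ <;> fin_cases v <;> fin_cases w <;>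
      simp_all [blkJ]
  | Sum.inr v, Sum.inl (a, k) =>
    exact fam5_inf t v a k
  | Sum.inl (a, k), Sum.inr v =>
    obtain ⟨B, h1, h2, h3⟩ := fam5_inf t v a k
    exact ⟨B, h1, h3, h2⟩
  | Sum.inl (a, k), Sum.inl (b, l) =>
    by_cases hk : k = l
    · subst hk
      have hab : a ≠ b := fun h => hxy (by rw [h])
      obtain ⟨B, hBmem, h1, h2⟩ := famA_cover_same (f5 t) k hab
      exact ⟨B.image Sum.inl, famA5_mem t hBmem, Finset.mem_image_of_mem _ h1,
        Finset.mem_image_of_mem _ h2⟩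
    · rcases fin3_cases hk with h | h
      · rw [h]; exact fam5_cross t a b k
      · obtain ⟨B, hBmem, h1, h2⟩ := fam5_cross t b a l
        rw [← h] at h2
        exact ⟨B, hBmem, h2, h1⟩

lemma cyc_ne_succ (i : ℕ) : cyc t i ≠ cyc t (i + 1) := by
  intro hcon
  have h2 := congrArg (fun p => (Prod.snd p).val) hcon
  simp only [cyc] at h2
  omega

lemma cyc_ne_last : cyc t (6 * t + 2) ≠ cyc t (6 * t + 3) := cyc_ne_succ t _

lemma fam5_card3 : ∀ B ∈ fam5 t, B.card = 3 := by
  intro B hBmem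
  rcases Finset.mem_union.1 hBmem with h | h
  · rcases Finset.mem_union.1 h with h' | h'
    · rcases Finset.mem_union.1 h' with h'' | h''
      · obtain ⟨C, hC, rfl⟩ := Finset.mem_image.1 h''
        rw [Finset.card_image_of_injective _ Sum.inl_injective]
        exact famA_card_3 _ hC
      · rcases Finset.mem_union.1 h'' with h3 | h3
        · obtain ⟨i, _, rfl⟩ := Finset.mem_image.1 h3
          refine Finset.card_eq_three.2 ⟨_, _, _, by simp, by simp, ?_, rfl⟩
          simp only [ne_eq, Sum.inl.injEq]
          exact cyc_ne_succ t (2 * i)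
        · rw [Finset.mem_singleton.1 h3]
          refine Finset.card_eq_three.2 ⟨_, _, _, by simp, by simp, ?_, rfl⟩
          simp only [ne_eq, Sum.inl.injEq]
          exact cyc_ne_last t
    · obtain ⟨i, _, rfl⟩ := Finset.mem_image.1 h'
      refine Finset.card_eq_three.2 ⟨_, _, _, by simp, by simp, ?_, rfl⟩
      simp only [ne_eq, Sum.inl.injEq]
      exact cyc_ne_succ t (2 * i + 1)
  · rw [Finset.mem_singleton.1 h]
    refine Finset.card_eq_three.2 ⟨Sum.inr 0, Sum.inr 1, Sum.inl (cyc t 0),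
      ?_, by simp, by simp, rfl⟩
    simp only [ne_eq, Sum.inr.injEq]
    intro hcon
    exact absurd (congrArg Fin.val hcon) (by norm_num)

lemma fam5_card_le : (fam5 t).card ≤ tgt (6 * t + 5) := by
  have h1 : (fam5 t).card ≤ (famA5 t).card + (famH1 t).card + (famH2 t).card + 1 := by
    have u1 := Finset.card_union_le (famA5 t ∪ famH1 t ∪ famH2 t) ({blkJ t} :
      Finset (Finset (SPt t)))
    have u2 := Finset.card_union_le (famA5 t ∪ famH1 t) (famH2 t)
    have u3 := Finset.card_union_le (famA5 t) (famH1 t)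
    rw [Finset.card_singleton] at u1
    unfold fam5
    omega
  have h2 : (famA5 t).card ≤ 3 * (M3 t * (M3 t - 1) / 2) :=
    le_trans Finset.card_image_le (famA_card_le (f5 t))
  have h3 : (famH1 t).card ≤ (3 * t + 1) + 1 := by
    refine le_trans (Finset.card_union_le _ _) ?_
    have := Finset.card_image_le (s := Finset.range (3 * t + 1)) (f := blkH1 t)
    rw [Finset.card_range] at this
    rw [Finset.card_singleton]
    omega
  have h4 : (famH2 t).card ≤ 3 * t + 1 := by
    have := Finset.card_image_le (s := Finset.range (3 * t + 1)) (f := blkH2 t)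
    rwa [Finset.card_range] at this
  have h5 : M3 t * (M3 t - 1) / 2 = (2 * t + 1) * t := by
    have e1 : M3 t * (M3 t - 1) = ((2 * t + 1) * t) * 2 := by
      show (2 * t + 1) * (2 * t + 1 - 1) = _
      have e0 : 2 * t + 1 - 1 = 2 * t := rfl
      rw [e0]; ring
    rw [e1, Nat.mul_div_cancel _ (by norm_num : 0 < 2)]
  have h6 : tgt (6 * t + 5) = 6 * t * t + 9 * t + 4 := by
    unfold tgt
    have e1 : (6 * t + 5) / 2 = 3 * t + 2 := by omega
    rw [e1]
    have e2 : (6 * t + 5) * (3 * t + 2) + 2 = 3 * (6 * t * t + 9 * t + 4) + 0 := by ring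
    rw [e2]
    generalize 6 * t * t + 9 * t + 4 = X
    omega
  rw [h5] at h2
  rw [h6]
  have e3 : 3 * ((2 * t + 1) * t) + ((3 * t + 1) + 1) + (3 * t + 1) + 1 =
      6 * t * t + 9 * t + 4 := by ring
  omega

lemma exists_cover_5 (t : ℕ) : ∃ X A, IsCovering (6 * t + 5) X A ∧ A.card ≤ tgt (6 * t + 5) := by
  have hcard : Fintype.card (SPt t) = 6 * t + 5 := by
    rw [Fintype.card_sum, Fintype.card_prod, ZMod.card, Fintype.card_fin, Fintype.card_fin]
    show (2 * t + 1) * 3 + 2 = 6 * t + 5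
    ring
  obtain ⟨X, A, hcov, hle⟩ := transfer (fam5 t) (fam5_card3 t) (fam5_cover t)
  rw [hcard] at hcov
  exact ⟨X, A, hcov, le_trans hle (fam5_card_le t)⟩

end Case5

end FH


namespace FH

lemma exists_cover_4 (t : ℕ) : ∃ X A, IsCovering (6 * t + 4) X A ∧ A.card ≤ tgt (6 * t + 4) := by
  obtain ⟨X, A, hcov, hle⟩ := exists_cover_3 t
  obtain ⟨X', A', hcov', hle'⟩ := star_extend (by omega) (by omega) hcov
  rw [show 6 * t + 3 + 1 = 6 * t + 4 from rfl] at hcov' hle'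
  refine ⟨X', A', hcov', ?_⟩
  have h3 : tgt (6 * t + 3) = 6 * t * t + 5 * t + 1 := by
    unfold tgt
    rw [show (6 * t + 3) / 2 = 3 * t + 1 by omega,
      show (6 * t + 3) * (3 * t + 1) + 2 = 3 * (6 * t * t + 5 * t + 1) + 2 by ring]
    generalize 6 * t * t + 5 * t + 1 = X
    omega
  have h4 : tgt (6 * t + 4) = 6 * t * t + 8 * t + 3 := by
    unfold tgt
    rw [show (6 * t + 4) / 2 = 3 * t + 2 by omega,
      show (6 * t + 4) * (3 * t + 2) + 2 = 3 * (6 * t * t + 8 * t + 3) + 1 by ring]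
    generalize 6 * t * t + 8 * t + 3 = X
    omega
  have h5 : (6 * t + 4) / 2 = 3 * t + 2 := by omega
  rw [h5] at hle'
  omega

lemma exists_cover_2 (t : ℕ) : ∃ X A, IsCovering (6 * t + 8) X A ∧ A.card ≤ tgt (6 * t + 8) := by
  obtain ⟨X, A, hcov, hle⟩ := exists_cover_1 t
  obtain ⟨X', A', hcov', hle'⟩ := star_extend (by omega) (by omega) hcov
  rw [show 6 * t + 7 + 1 = 6 * t + 8 from rfl] at hcov' hle'
  refine ⟨X', A', hcov', ?_⟩
  have h3 : tgt (6 * t + 7) = 6 * t * t + 13 * t + 7 := by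
    unfold tgt
    rw [show (6 * t + 7) / 2 = 3 * t + 3 by omega,
      show (6 * t + 7) * (3 * t + 3) + 2 = 3 * (6 * t * t + 13 * t + 7) + 2 by ring]
    generalize 6 * t * t + 13 * t + 7 = X
    omega
  have h4 : tgt (6 * t + 8) = 6 * t * t + 16 * t + 11 := by
    unfold tgt
    rw [show (6 * t + 8) / 2 = 3 * t + 4 by omega,
      show (6 * t + 8) * (3 * t + 4) + 2 = 3 * (6 * t * t + 16 * t + 11) + 1 by ring]
    generalize 6 * t * t + 16 * t + 11 = X
    omega
  have h5 : (6 * t + 8) / 2 = 3 * t + 4 := by omega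
  rw [h5] at hle'
  omega

lemma exists_cover (n : ℕ) (hn : 3 ≤ n) :
    ∃ X A, IsCovering n X A ∧ A.card ≤ tgt n := by
  rcases (by omega : n % 6 = 0 ∨ n % 6 = 1 ∨ n % 6 = 2 ∨ n % 6 = 3 ∨ n % 6 = 4 ∨ n % 6 = 5)
    with h | h | h | h | h | h
  · obtain ⟨t, rfl⟩ : ∃ t, n = 6 * t + 6 := ⟨n / 6 - 1, by omega⟩
    exact exists_cover_0 t
  · obtain ⟨t, rfl⟩ : ∃ t, n = 6 * t + 7 := ⟨n / 6 - 1, by omega⟩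
    exact exists_cover_1 t
  · obtain ⟨t, rfl⟩ : ∃ t, n = 6 * t + 8 := ⟨n / 6 - 1, by omega⟩
    exact exists_cover_2 t
  · obtain ⟨t, rfl⟩ : ∃ t, n = 6 * t + 3 := ⟨n / 6, by omega⟩
    exact exists_cover_3 t
  · obtain ⟨t, rfl⟩ : ∃ t, n = 6 * t + 4 := ⟨n / 6, by omega⟩
    exact exists_cover_4 t
  · obtain ⟨t, rfl⟩ : ∃ t, n = 6 * t + 5 := ⟨n / 6, by omega⟩
    exact exists_cover_5 t

lemma coveringNumber_eq (n : ℕ) (hn : 3 ≤ n) : coveringNumber n = tgt n := by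
  obtain ⟨X, A, hcov, hle⟩ := exists_cover n hn
  have hlow : ∀ m ∈ {m | ∃ X A, IsCovering n X A ∧ A.card = m}, tgt n ≤ m := by
    rintro m ⟨X', A', h', rfl⟩
    exact lower_bound h'
  apply le_antisymm
  · exact le_trans (Nat.sInf_le ⟨X, A, hcov, rfl⟩) hle
  · exact hlow _ (Nat.sInf_mem ⟨A.card, X, A, hcov, rfl⟩)

end FH


/-- (Fort–Hedlund) For every integer `n ≥ 3`,
`C(n,3,2) = ⌈(n/3)·⌈(n−1)/2⌉⌉`. -/
theorem fort_hedlund (n : ℕ) (hn : 3 ≤ n) :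
    (coveringNumber n : ℤ) = ⌈(n : ℚ) / 3 * ((⌈((n : ℚ) - 1) / 2⌉ : ℤ) : ℚ)⌉ := by
  rw [FH.coveringNumber_eq n hn]
  exact FH.tgt_eq_ceil n (by omega)
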